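/- Let p be an odd prime, let ζ = exp(2πi/p) ∈ ℂ, and let 2^{1/p} be the real positive p-th root of 2. For every integer k with 1 ≤ k < p and every choice of integers 0 ≤ j_1 < j_2 < … < j_k ≤ p − 1, the product ∏_{l=1}^{k} (2^{1/p}·ζ^{j_l} − 1) is different from 1. In other words, no product of the numbers σ(2^{1/p} − 1), where σ ranges over a nonempty proper subset of the p embeddings of ℚ(2^{1/p}) into ℂ, equals 1. -/

import Mathlib

open Polynomial IntermediateField

/-- Let `p` be an odd prime, `ζ = exp(2πi/p) ∈ ℂ`, and `2^(1/p)` the real positive `p`-th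
root of `2`. For every nonempty proper subset `J` of `{0, …, p−1}` (i.e. every choice of
`1 ≤ k < p` indices `0 ≤ j₁ < … < j_k ≤ p−1`), the product `∏_{j ∈ J} (2^(1/p)·ζ^j − 1)`
is different from `1`. -/
theorem stmt4 (p : ℕ) (hp : p.Prime) (hodd : Odd p)
    (ζ : ℂ) (hζ : ζ = Complex.exp (2 * Real.pi * Complex.I / p))
    (c : ℝ) (hc : c = (2 : ℝ) ^ ((1 : ℝ) / p))
    (J : Finset ℕ) (hJ : J ⊆ Finset.range p) (hne : J.Nonempty) (hcard : J.card < p) :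
    ∏ j ∈ J, ((c : ℂ) * ζ ^ j - 1) ≠ 1 := by
  intro hprod
  have hp0 : p ≠ 0 := hp.pos.ne'
  have hzeta : IsPrimitiveRoot ζ p := hζ ▸ Complex.isPrimitiveRoot_exp p hp0
  have hζ0 : ζ ≠ 0 := by
    rw [hζ]; exact Complex.exp_ne_zero _
  have hcpos : (0:ℝ) < c := by
    rw [hc]; positivity
  have hcp : c ^ p = 2 := by
    rw [hc, ← Real.rpow_natCast ((2:ℝ) ^ ((1:ℝ)/p)) p, ← Real.rpow_mul (by norm_num),
      one_div, inv_mul_cancel₀ (by exact_mod_cast hp0), Real.rpow_one]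
  -- c is irrational
  have hirr : Irrational c := by
    have : Fact (Nat.Prime 2) := ⟨Nat.prime_two⟩
    refine irrational_nrt_of_n_not_dvd_multiplicity p (by norm_num : (2:ℤ) ≠ 0) 2
      (by exact_mod_cast hcp) ?_
    rw [show ((2:ℕ):ℤ) = (2:ℤ) by norm_num, multiplicity_self]
    have h2 := hp.two_le
    rw [Nat.mod_eq_of_lt (by omega)]
    omega
  -- 2 is not a p-th power in ℚ
  have hQ2 : ∀ b : ℚ, b ^ p ≠ (2:ℚ) := by
    intro b hb
    apply hirr
    have hb' : (b:ℝ) ^ p = c ^ p := by rw [hcp]; exact_mod_cast hb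
    exact ⟨b, (hodd.strictMono_pow (R := ℝ)).injective hb'⟩
  have hirrQ : Irreducible (X ^ p - C (2:ℚ)) := X_pow_sub_C_irreducible_of_prime hp hQ2
  -- the field F = ℚ(ζ)
  set F : IntermediateField ℚ ℂ := ℚ⟮ζ⟯ with hF
  have hζint : IsIntegral ℚ ζ := (hzeta.isIntegral hp.pos).tower_top
  have : FiniteDimensional ℚ F := IntermediateField.adjoin.finiteDimensional hζint
  have hfinrankF : Module.finrank ℚ F = p - 1 := by
    rw [hF, IntermediateField.adjoin.finrank hζint,
      ← Polynomial.cyclotomic_eq_minpoly_rat hzeta hp.pos,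
      Polynomial.natDegree_cyclotomic, Nat.totient_prime hp]
  -- 2 is not a p-th power in F
  have hF2 : ∀ b : F, b ^ p ≠ (2:F) := by
    intro b hb
    have hb' : (b:ℂ) ^ p = 2 := by
      rw [show ((b:ℂ)) = algebraMap F ℂ b from rfl, ← map_pow, hb, map_ofNat]
    have heval : (Polynomial.aeval (b:ℂ)) (X ^ p - C (2:ℚ)) = 0 := by
      simp [hb']
    have hbint : IsIntegral ℚ (b:ℂ) :=
      ⟨X ^ p - C (2:ℚ), monic_X_pow_sub_C _ hp0, heval⟩
    have hminb : minpoly ℚ (b:ℂ) = X ^ p - C (2:ℚ) :=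
      (minpoly.eq_of_irreducible_of_monic hirrQ heval (monic_X_pow_sub_C _ hp0)).symm
    have hrankb : Module.finrank ℚ ℚ⟮(b:ℂ)⟯ = p := by
      rw [IntermediateField.adjoin.finrank hbint, hminb, natDegree_X_pow_sub_C]
    have hle : ℚ⟮(b:ℂ)⟯ ≤ F := by
      rw [IntermediateField.adjoin_le_iff]
      intro x hx
      rcases hx with rfl
      exact b.2
    haveI : Module.Finite ℚ (Subalgebra.toSubmodule F.toSubalgebra) := ‹FiniteDimensional ℚ F›
    have := Submodule.finrank_mono (R := ℚ) (M := ℂ)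
      (s := Subalgebra.toSubmodule ℚ⟮(b:ℂ)⟯.toSubalgebra)
      (t := Subalgebra.toSubmodule F.toSubalgebra) (by exact_mod_cast hle)
    rw [show Module.finrank ℚ (Subalgebra.toSubmodule ℚ⟮(b:ℂ)⟯.toSubalgebra) =
        Module.finrank ℚ ℚ⟮(b:ℂ)⟯ from rfl,
      show Module.finrank ℚ (Subalgebra.toSubmodule F.toSubalgebra) =
        Module.finrank ℚ F from rfl, hrankb, hfinrankF] at this
    have := hp.two_le
    omega
  have hirrF : Irreducible (X ^ p - C (2:F)) := X_pow_sub_C_irreducible_of_prime hp hF2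
  -- minimal polynomial of c over F
  have hcC : ((c:ℂ)) ^ p = 2 := by exact_mod_cast hcp
  have hevalc : (Polynomial.aeval (c:ℂ)) (X ^ p - C (2:F)) = 0 := by
    rw [map_sub, map_pow, aeval_X, aeval_C, hcC, map_ofNat, sub_self]
  have hminc : minpoly F ((c:ℂ)) = X ^ p - C (2:F) :=
    (minpoly.eq_of_irreducible_of_monic hirrF hevalc (monic_X_pow_sub_C _ hp0)).symm
  -- the polynomial Q
  set z : F := ⟨ζ, IntermediateField.mem_adjoin_simple_self ℚ ζ⟩ with hz
  have hz0 : z ≠ 0 := by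
    intro h
    apply hζ0
    have := congrArg (Subtype.val) h
    exact this
  set P : F[X] := ∏ j ∈ J, (C (z ^ j) * X - 1) with hP
  have hdeg : ∀ j : ℕ, (C (z ^ j) * X - 1 : F[X]).natDegree = 1 := by
    intro j
    rw [show (C (z ^ j) * X - 1 : F[X]) = C (z ^ j) * X + C (-1) by
      rw [map_neg, map_one]; ring]
    exact natDegree_linear (pow_ne_zero _ hz0)
  have hfac : ∀ j : ℕ, (C (z ^ j) * X - 1 : F[X]) ≠ 0 := by
    intro j h
    have h1 := hdeg j
    rw [h] at h1
    simp at h1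
  have hPdeg : P.natDegree = J.card := by
    rw [hP, Polynomial.natDegree_prod _ _ (fun j _ => hfac j),
      Finset.sum_congr rfl (fun j _ => hdeg j), Finset.sum_const, smul_eq_mul, mul_one]
  have hQeval : (Polynomial.aeval (c:ℂ)) (P - 1) = 0 := by
    rw [map_sub, map_one, hP, map_prod, sub_eq_zero]
    rw [← hprod]
    refine Finset.prod_congr rfl fun j _ => ?_
    simp only [map_sub, map_mul, map_one, aeval_X, aeval_C]
    have : (algebraMap F ℂ) (z ^ j) = ζ ^ j := by rw [map_pow]; rfl
    rw [this]; ring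
  have hQne : P - 1 ≠ 0 := by
    intro h
    have hP1 : P = 1 := sub_eq_zero.mp h
    have : J.card = 0 := by rw [← hPdeg, hP1, natDegree_one]
    exact absurd this (Finset.card_pos.mpr hne).ne'
  have hdvd : minpoly F ((c:ℂ)) ∣ (P - 1) := minpoly.dvd F _ hQeval
  have hdle : (minpoly F ((c:ℂ))).natDegree ≤ (P - 1).natDegree :=
    Polynomial.natDegree_le_of_dvd hdvd hQne
  rw [hminc, natDegree_X_pow_sub_C] at hdle
  have : (P - 1).natDegree ≤ J.card := by
    calc (P - 1).natDegree ≤ max P.natDegree (1 : F[X]).natDegree := natDegree_sub_le _ _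
    _ ≤ J.card := by rw [hPdeg, natDegree_one]; omega
  omega
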